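/- Let n : ℕ, let A : ℝ → Matrix (Fin n) (Fin n) ℝ be continuous, and let g : ℝ → Matrix (Fin n) (Fin n) ℝ satisfy HasDerivAt g (g t * A t) t for every t ∈ ℝ. If g t₀ is invertible for some t₀ ∈ ℝ, then g t is invertible for every t ∈ ℝ. -/

import Mathlib

attribute [local instance] Matrix.normedAddCommGroup Matrix.normedSpace
open Matrix

noncomputable def detCM (n : ℕ) : ContinuousMultilinearMap ℝ (fun _ : Fin n => Fin n → ℝ) ℝ where
  toMultilinearMap := (Matrix.detRowAlternating : (Fin n → ℝ) [⋀^Fin n]→ₗ[ℝ] ℝ).toMultilinearMap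
  cont := by
    have h : Continuous fun v : Fin n → Fin n → ℝ => (Matrix.of v).det :=
      Continuous.matrix_det (by exact continuous_id)
    exact h

theorem detCM_eq_det {n : ℕ} (v : Fin n → Fin n → ℝ) : detCM n v = Matrix.det (Matrix.of v) := by
  rfl

noncomputable def transCLM (n : ℕ) : Matrix (Fin n) (Fin n) ℝ →L[ℝ] (Fin n → Fin n → ℝ) :=
  LinearMap.toContinuousLinearMap
    { toFun := fun M j i => M i j
      map_add' := fun M N => rfl
      map_smul' := fun c M => rfl }

theorem hasDerivAt_det {n : ℕ} (A g : ℝ → Matrix (Fin n) (Fin n) ℝ)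
    (hg : ∀ t : ℝ, HasDerivAt g (g t * A t) t) (t : ℝ) :
    HasDerivAt (fun t => (g t).det) ((g t).det * (A t).trace) t := by
  have hφ : HasDerivAt (fun t => transCLM n (g t)) (transCLM n (g t * A t)) t :=
    (transCLM n).hasFDerivAt.comp_hasDerivAt t (hg t)
  have hD : HasDerivAt (fun t => detCM n (transCLM n (g t)))
      ((detCM n).linearDeriv (transCLM n (g t)) (transCLM n (g t * A t))) t :=
    ((detCM n).hasFDerivAt _).comp_hasDerivAt t hφ
  have hfun : (fun t => detCM n (transCLM n (g t))) = fun t => (g t).det := by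
    funext s
    rw [detCM_eq_det]
    exact Matrix.det_transpose _
  have hval : (detCM n).linearDeriv (transCLM n (g t)) (transCLM n (g t * A t))
      = (g t).det * (A t).trace := by
    rw [ContinuousMultilinearMap.linearDeriv_apply]
    have hterm : ∀ j, detCM n (Function.update (transCLM n (g t)) j (transCLM n (g t * A t) j))
        = A t j j * (g t).det := by
      intro j
      have h1 : transCLM n (g t * A t) j = ∑ k, A t k j • (g t)ᵀ k := by
        funext i
        show (g t * A t) i j = _
        simp [transCLM, Matrix.mul_apply, Matrix.transpose_apply, mul_comm]
      have h2 : Function.update (transCLM n (g t)) j (transCLM n (g t * A t) j)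
          = Matrix.updateRow (g t)ᵀ j (∑ k, A t k j • (g t)ᵀ k) := by
        rw [h1]; rfl
      rw [h2]
      refine (detCM_eq_det _).trans ?_
      have := Matrix.det_updateRow_sum (g t)ᵀ j (fun k => A t k j)
      rw [show Matrix.of (Matrix.updateRow (g t)ᵀ j (∑ k, A t k j • (g t)ᵀ k))
          = Matrix.updateRow (g t)ᵀ j (∑ k, A t k j • (g t)ᵀ k) from rfl, this,
        Matrix.det_transpose, smul_eq_mul]
    rw [Finset.sum_congr rfl fun j _ => hterm j]
    rw [Matrix.trace, Finset.mul_sum]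
    exact Finset.sum_congr rfl fun j _ => by rw [Matrix.diag_apply, mul_comm]
  rw [hfun, hval] at hD
  exact hD

/-- A solution of the development equation `g′ = g · A` which is invertible at one
time is invertible at every time: the development takes values in `GL(n, ℝ)`. -/
theorem development_stays_invertible {n : ℕ}
    (A g : ℝ → Matrix (Fin n) (Fin n) ℝ)
    (hA : Continuous A)
    (hg : ∀ t : ℝ, HasDerivAt g (g t * A t) t)
    (t₀ : ℝ) (h0 : IsUnit (g t₀)) :
    ∀ t : ℝ, IsUnit (g t) := by
  have hdet : ∀ t, HasDerivAt (fun t => (g t).det) ((g t).det * (A t).trace) t :=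
    hasDerivAt_det A g hg
  set c : ℝ → ℝ := fun t => (A t).trace with hc_def
  have hc : Continuous c := hA.matrix_trace
  set F : ℝ → ℝ := fun t => ∫ s in t₀..t, c s with hF_def
  have hF : ∀ t, HasDerivAt F (c t) t := fun t =>
    intervalIntegral.integral_hasDerivAt_right (hc.intervalIntegrable _ _)
      (hc.stronglyMeasurable.stronglyMeasurableAtFilter) hc.continuousAt
  set z : ℝ → ℝ := fun t => (g t).det * Real.exp (-F t) with hz_def
  have hz : ∀ t, HasDerivAt z 0 t := by
    intro t
    have hexp : HasDerivAt (fun t => Real.exp (-F t)) (Real.exp (-F t) * -c t) t :=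
      ((hF t).neg).exp
    have := (hdet t).mul hexp
    refine this.congr_deriv ?_
    simp only [hc_def]
    ring
  have hzconst : ∀ t, z t = z t₀ := by
    intro t
    exact is_const_of_deriv_eq_zero (fun s => (hz s).differentiableAt)
      (fun s => (hz s).deriv) t t₀
  intro t
  have h0' : (g t₀).det ≠ 0 := by
    have := (Matrix.isUnit_iff_isUnit_det _).mp h0
    exact IsUnit.ne_zero this
  have : (g t).det ≠ 0 := by
    intro h
    have := hzconst t
    rw [hz_def] at this
    simp only [h, zero_mul] at this
    exact h0' (by
      have hexp := Real.exp_ne_zero (-F t₀)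
      field_simp at this
      exact (mul_eq_zero.mp this.symm).resolve_right hexp)
  exact (Matrix.isUnit_iff_isUnit_det _).mpr (isUnit_iff_ne_zero.mpr this)
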